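/- For every 0 ≤ i ≤ n−1 the following identities of bounded linear maps hold: (1) P_{(ker S^i)^⊥} ∘ D̃^{i−1} ∘ T^i = −T^{i+1} ∘ D^i ∘ P_{ran S^{i−1}} (as maps Z^i → Z̃^i); (2) P_{(ran S^i)^⊥} ∘ D^i ∘ P_{ran S^{i−1}} = 0; (3) D^{i+1} ∘ P_{ran S^i} ∘ D^i = −D^{i+1} ∘ P_{(ran S^i)^⊥} ∘ D^i; (4) P_{(ran S^{i+1})^⊥} ∘ D^{i+1} ∘ P_{(ran S^i)^⊥} ∘ D^i = 0; (5) P_{ker S^{i+1}} ∘ D̃^i ∘ P_{ker S^i} = D̃^i ∘ P_{ker S^i}. -/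

import Mathlib

/-!
STATEMENT 8: the five operator identities of Lemma 8.  Here `projS Pran i` is the orthogonal
projection `P_{ran S^{i-1}}` of `Z^i` (with `P_{ran S^{-1}} = 0`), `Pker i` is the orthogonal
projection `P_{ker S^i}` of `Z̃^i`, `T i : Z^{i+1} → Z̃^i` is the Moore–Penrose pseudoinverse
`T^{i+1}` of `S^i`, and `DtT i : Z^i → Z̃^i` is the composite `D̃^{i-1} ∘ T^i` (zero for
`i = 0`, by the conventions `T^0 = 0`, `D̃^{-1} = 0`).
-/

noncomputable section

/-- `P_{ran S^{i-1}} : Z^i → Z^i` (with `P_{ran S^{-1}} = 0`). -/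
def projS {Z : ℕ → Type*}
    [∀ i, NormedAddCommGroup (Z i)] [∀ i, InnerProductSpace ℝ (Z i)]
    (Pran : ∀ i, Z (i + 1) →L[ℝ] Z (i + 1)) : ∀ i, Z i →L[ℝ] Z i
  | 0 => 0
  | m + 1 => Pran m

/-- `D̃^{i-1} ∘ T^i : Z^i → Z̃^i` (zero for `i = 0`). -/
def DtT {Z Zt : ℕ → Type*}
    [∀ i, NormedAddCommGroup (Z i)] [∀ i, InnerProductSpace ℝ (Z i)]
    [∀ i, NormedAddCommGroup (Zt i)] [∀ i, InnerProductSpace ℝ (Zt i)]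
    (Dt : ∀ i, Zt i →L[ℝ] Zt (i + 1)) (T : ∀ i, Z (i + 1) →L[ℝ] Zt i) :
    ∀ i, Z i →L[ℝ] Zt i
  | 0 => 0
  | m + 1 => (Dt m).comp (T m)

/-- If `x ∈ K`, `p ∈ K` and `x - p ∈ Kᗮ`, then `p = x`. -/
lemma proj_fix {E : Type*} [NormedAddCommGroup E] [InnerProductSpace ℝ E]
    (K : Submodule ℝ E) {x p : E} (hx : x ∈ K) (hp : p ∈ K) (ho : x - p ∈ Kᗮ) : p = x := by
  have hm : x - p ∈ K := K.sub_mem hx hp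
  have h0 : x - p = 0 := by
    have := (Submodule.orthogonal_disjoint K).le_bot ⟨hm, ho⟩
    simpa using this
  have := sub_eq_zero.mp h0
  exact this.symm

theorem stmt_8
    (n : ℕ) (hn : 1 ≤ n)
    {Z Zt : ℕ → Type*}
    [∀ i, NormedAddCommGroup (Z i)] [∀ i, InnerProductSpace ℝ (Z i)] [∀ i, CompleteSpace (Z i)]
    [∀ i, NormedAddCommGroup (Zt i)] [∀ i, InnerProductSpace ℝ (Zt i)] [∀ i, CompleteSpace (Zt i)]
    (D : ∀ i, Z i →L[ℝ] Z (i + 1)) (Dt : ∀ i, Zt i →L[ℝ] Zt (i + 1))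
    (S : ∀ i, Zt i →L[ℝ] Z (i + 1))
    (Pran : ∀ i, Z (i + 1) →L[ℝ] Z (i + 1)) (Pker : ∀ i, Zt i →L[ℝ] Zt i)
    (T : ∀ i, Z (i + 1) →L[ℝ] Zt i)
    (hDD : ∀ i (x : Z i), D (i + 1) (D i x) = 0)
    (hDtDt : ∀ i (x : Zt i), Dt (i + 1) (Dt i x) = 0)
    (hDtop : ∀ i, n ≤ i → D i = 0) (hDttop : ∀ i, n ≤ i → Dt i = 0)
    (hStop : ∀ i, n ≤ i → S i = 0)
    (hanti : ∀ i (x : Zt i), S (i + 1) (Dt i x) = -D (i + 1) (S i x))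
    (hScl : ∀ i, IsClosed ((LinearMap.range (S i : Zt i →ₗ[ℝ] Z (i + 1)) : Submodule ℝ (Z (i + 1))) : Set (Z (i + 1))))
    -- orthogonal projections onto `ran S^i` and `ker S^i`
    (hPranMem : ∀ i (x : Z (i + 1)), Pran i x ∈ LinearMap.range (S i : Zt i →ₗ[ℝ] Z (i + 1)))
    (hPranOrth : ∀ i (x : Z (i + 1)), x - Pran i x ∈ (LinearMap.range (S i : Zt i →ₗ[ℝ] Z (i + 1)))ᗮ)
    (hPkerMem : ∀ i (x : Zt i), Pker i x ∈ LinearMap.ker (S i : Zt i →ₗ[ℝ] Z (i + 1)))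
    (hPkerOrth : ∀ i (x : Zt i), x - Pker i x ∈ (LinearMap.ker (S i : Zt i →ₗ[ℝ] Z (i + 1)))ᗮ)
    -- `T i` is the Moore–Penrose pseudoinverse of `S i`
    (hTzero : ∀ i, ∀ x ∈ (LinearMap.range (S i : Zt i →ₗ[ℝ] Z (i + 1)))ᗮ, T i x = 0)
    (hTS : ∀ i (x : Zt i), T i (S i x) = x - Pker i x)
    (hST : ∀ i (x : Z (i + 1)), S i (T i x) = Pran i x) :
    -- (1) `P_{(ker S^i)^⊥} ∘ D̃^{i-1} ∘ T^i = −T^{i+1} ∘ D^i ∘ P_{ran S^{i-1}}` on `Z^i`: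
    (∀ i, i + 1 ≤ n → ∀ x : Z i,
      DtT Dt T i x - Pker i (DtT Dt T i x) = -(T i (D i (projS Pran i x)))) ∧
    -- (2) `P_{(ran S^i)^⊥} ∘ D^i ∘ P_{ran S^{i-1}} = 0`:
    (∀ i, i + 1 ≤ n → ∀ x : Z i,
      D i (projS Pran i x) - Pran i (D i (projS Pran i x)) = 0) ∧
    -- (3) `D^{i+1} ∘ P_{ran S^i} ∘ D^i = −D^{i+1} ∘ P_{(ran S^i)^⊥} ∘ D^i`:
    (∀ i, i + 1 ≤ n → ∀ x : Z i,
      D (i + 1) (Pran i (D i x)) = -(D (i + 1) (D i x - Pran i (D i x)))) ∧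
    -- (4) `P_{(ran S^{i+1})^⊥} ∘ D^{i+1} ∘ P_{(ran S^i)^⊥} ∘ D^i = 0`:
    (∀ i, i + 1 ≤ n → ∀ x : Z i,
      D (i + 1) (D i x - Pran i (D i x))
          - Pran (i + 1) (D (i + 1) (D i x - Pran i (D i x))) = 0) ∧
    -- (5) `P_{ker S^{i+1}} ∘ D̃^i ∘ P_{ker S^i} = D̃^i ∘ P_{ker S^i}`:
    (∀ i, i + 1 ≤ n → ∀ x : Zt i,
      Pker (i + 1) (Dt i (Pker i x)) = Dt i (Pker i x)) := by
  have hfixR : ∀ i (v : Z (i + 1)), v ∈ LinearMap.range (S i : Zt i →ₗ[ℝ] Z (i + 1)) → Pran i v = v := by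
    intro i v hv
    exact proj_fix _ hv (hPranMem i v) (hPranOrth i v)
  have hfixK : ∀ i (v : Zt i), v ∈ LinearMap.ker (S i : Zt i →ₗ[ℝ] Z (i + 1)) → Pker i v = v := by
    intro i v hv
    exact proj_fix _ hv (hPkerMem i v) (hPkerOrth i v)
  have hDS : ∀ i (y : Zt i), D (i + 1) (S i y) = -(S (i + 1) (Dt i y)) := by
    intro i y
    have := hanti i y
    rw [this, neg_neg]
  refine ⟨?_, ?_, ?_, ?_, ?_⟩
  · -- (1)
    rintro (_ | m) _ x
    · simp [DtT, projS]
    · show Dt m (T m x) - Pker (m + 1) (Dt m (T m x)) = -(T (m + 1) (D (m + 1) (Pran m x)))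
      rw [show Pran m x = S m (T m x) from (hST m x).symm, hDS, map_neg, neg_neg, hTS]
  · -- (2)
    rintro (_ | m) _ x
    · simp [projS]
    · show D (m + 1) (Pran m x) - Pran (m + 1) (D (m + 1) (Pran m x)) = 0
      have hmem : D (m + 1) (Pran m x) ∈ LinearMap.range (S (m + 1) : Zt (m + 1) →ₗ[ℝ] Z (m + 1 + 1)) := by
        rw [show Pran m x = S m (T m x) from (hST m x).symm, hDS, ← map_neg]
        exact ⟨-(Dt m (T m x)), rfl⟩
      rw [hfixR (m + 1) _ hmem, sub_self]
  · -- (3)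
    intro i _ x
    simp [map_sub, hDD]
  · -- (4)
    intro i _ x
    have key : D (i + 1) (D i x - Pran i (D i x)) = S (i + 1) (Dt i (T i (D i x))) := by
      rw [map_sub, hDD, zero_sub,
        show Pran i (D i x) = S i (T i (D i x)) from (hST i (D i x)).symm, hDS, neg_neg]
    rw [key, hfixR (i + 1) (S (i + 1) (Dt i (T i (D i x)))) ⟨Dt i (T i (D i x)), rfl⟩, sub_self]
  · -- (5)
    intro i _ x
    apply hfixK
    have h0 : S i (Pker i x) = 0 := hPkerMem i x
    rw [LinearMap.mem_ker, ContinuousLinearMap.coe_coe]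
    rw [hanti i (Pker i x), h0, map_zero, neg_zero]

end
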